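/- arXiv:2108.09585 — 2 statements merged into one kernel-verified Lean document; each statement's English description precedes it below -/
import Mathlib

section
/- One-step preservation of concavity by the Bellman operator. If v : S × B → ℝ is bounded and, for every s ∈ S, the function b ↦ v(s, b) is concave on B (i.e. v(s, t • b₁ + (1 − t) • b₂) ≥ t * v(s, b₁) + (1 − t) * v(s, b₂) for all b₁, b₂ ∈ B and t ∈ [0, 1]), then for every s ∈ S the function b ↦ (Hv)(s, b) is also concave on B. -/
open Finset

/-- The belief simplex over the modulation space `M`. -/
abbrev Belief (M : Type) [Fintype M] : Type :=
  {b : M → ℝ // (∀ μ, 0 ≤ b μ) ∧ ∑ μ, b μ = 1}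

/-- A finite SEP-POMDP: feasible action sets, cost function, state transition
probabilities, modulation/observation probabilities, and a discount factor. -/
structure SEP (S Y M A : Type) [Fintype S] [Fintype Y] [Fintype M] [Fintype A] where
  act : S → Finset A
  act_ne : ∀ s, (act s).Nonempty
  c : S → Y → A → ℝ
  p : Y → S → A → S → ℝ
  p_nonneg : ∀ y' s a s', 0 ≤ p y' s a s'
  p_sum : ∀ y' s a, ∑ s', p y' s a s' = 1
  Q : M → Y → M → ℝ
  Q_nonneg : ∀ μ y' μ', 0 ≤ Q μ y' μ'
  Q_sum : ∀ μ, ∑ y', ∑ μ', Q μ y' μ' = 1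
  β : ℝ
  β_nonneg : 0 ≤ β
  β_lt_one : β < 1

namespace SEP

variable {S Y M A : Type} [Fintype S] [Fintype Y] [Fintype M] [Fintype A]

/-- `σ(y' | b) = ∑ μ, ∑ μ', b μ * Q μ y' μ'`. -/
def sig (P : SEP S Y M A) (b : Belief M) (y' : Y) : ℝ :=
  ∑ μ, ∑ μ', b.1 μ * P.Q μ y' μ'

/-- The Bayesian belief update `λ(y', b)`. -/
noncomputable def lam (P : SEP S Y M A) (y' : Y) (b : Belief M) : Belief M :=
  if h : 0 < P.sig b y' then
    ⟨fun μ' => (∑ μ, b.1 μ * P.Q μ y' μ') / P.sig b y',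
      fun μ' => div_nonneg (Finset.sum_nonneg fun μ _ =>
        mul_nonneg (b.2.1 μ) (P.Q_nonneg μ y' μ')) h.le,
      by
        rw [← Finset.sum_div, Finset.sum_comm]
        exact div_self (ne_of_gt h)⟩
  else b

/-- `h_{y'}(s, a, v̄) = c s y' a + β * ∑ s', p y' s a s' * v̄ s'`. -/
def hy (P : SEP S Y M A) (y' : Y) (s : S) (a : A) (vb : S → ℝ) : ℝ :=
  P.c s y' a + P.β * ∑ s', P.p y' s a s' * vb s'

/-- The Bellman operator `H` of the SEP-POMDP. -/
noncomputable def H (P : SEP S Y M A) (v : S → Belief M → ℝ) (s : S) (b : Belief M) : ℝ :=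
  (P.act s).inf' (P.act_ne s) fun a =>
    ∑ y', P.sig b y' * P.hy y' s a fun s' => v s' (P.lam y' b)

/-- Boundedness of a function `v : S × B → ℝ`. -/
def Bdd (v : S → Belief M → ℝ) : Prop :=
  ∃ C, ∀ s b, |v s b| ≤ C

end SEP


/-- Pointwise convex combination `t • b₁ + (1 - t) • b₂` of two beliefs. -/
def Belief.conv {M : Type} [Fintype M] (t : ℝ) (ht0 : 0 ≤ t) (ht1 : t ≤ 1)
    (b₁ b₂ : Belief M) : Belief M :=
  ⟨fun μ => t * b₁.1 μ + (1 - t) * b₂.1 μ,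
    fun μ => add_nonneg (mul_nonneg ht0 (b₁.2.1 μ))
      (mul_nonneg (by linarith) (b₂.2.1 μ)),
    by
      rw [Finset.sum_add_distrib, ← Finset.mul_sum, ← Finset.mul_sum, b₁.2.2, b₂.2.2]
      ring⟩

section Aux

variable {S Y M A : Type} [Fintype S] [Fintype Y] [Fintype M] [Fintype A]

lemma sig_nonneg (P : SEP S Y M A) (b : Belief M) (y' : Y) : 0 ≤ P.sig b y' :=
  Finset.sum_nonneg fun μ _ => Finset.sum_nonneg fun μ' _ =>
    mul_nonneg (b.2.1 μ) (P.Q_nonneg μ y' μ')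

lemma num_nonneg (P : SEP S Y M A) (b : Belief M) (y' : Y) (μ' : M) :
    0 ≤ ∑ μ, b.1 μ * P.Q μ y' μ' :=
  Finset.sum_nonneg fun μ _ => mul_nonneg (b.2.1 μ) (P.Q_nonneg μ y' μ')

lemma sig_eq_sum_num (P : SEP S Y M A) (b : Belief M) (y' : Y) :
    P.sig b y' = ∑ μ', ∑ μ, b.1 μ * P.Q μ y' μ' := Finset.sum_comm

lemma num_eq_zero (P : SEP S Y M A) (b : Belief M) (y' : Y) (h : P.sig b y' = 0) (μ' : M) :
    ∑ μ, b.1 μ * P.Q μ y' μ' = 0 := by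
  rw [sig_eq_sum_num] at h
  have := (Finset.sum_eq_zero_iff_of_nonneg
    (fun μ' _ => num_nonneg P b y' μ')).mp h
  exact this μ' (Finset.mem_univ μ')

lemma sig_conv (P : SEP S Y M A) (t : ℝ) (ht0 : 0 ≤ t) (ht1 : t ≤ 1)
    (b₁ b₂ : Belief M) (y' : Y) :
    P.sig (Belief.conv t ht0 ht1 b₁ b₂) y' = t * P.sig b₁ y' + (1 - t) * P.sig b₂ y' := by
  simp only [SEP.sig, Belief.conv, add_mul, Finset.sum_add_distrib, Finset.mul_sum, mul_assoc]

lemma key (P : SEP S Y M A) (v : S → Belief M → ℝ)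
    (hconc : ∀ (s : S) (b₁ b₂ : Belief M) (t : ℝ) (ht0 : 0 ≤ t) (ht1 : t ≤ 1),
      t * v s b₁ + (1 - t) * v s b₂ ≤ v s (Belief.conv t ht0 ht1 b₁ b₂))
    (s' : S) (b₁ b₂ : Belief M) (t : ℝ) (ht0 : 0 ≤ t) (ht1 : t ≤ 1) (y' : Y) :
    t * P.sig b₁ y' * v s' (P.lam y' b₁) + (1 - t) * P.sig b₂ y' * v s' (P.lam y' b₂)
      ≤ P.sig (Belief.conv t ht0 ht1 b₁ b₂) y' * v s' (P.lam y' (Belief.conv t ht0 ht1 b₁ b₂)) := by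
  set b := Belief.conv t ht0 ht1 b₁ b₂ with hb
  have hσ : P.sig b y' = t * P.sig b₁ y' + (1 - t) * P.sig b₂ y' := sig_conv ..
  have h1 : 0 ≤ t * P.sig b₁ y' := mul_nonneg ht0 (sig_nonneg ..)
  have h2 : 0 ≤ (1 - t) * P.sig b₂ y' := mul_nonneg (by linarith) (sig_nonneg ..)
  rcases eq_or_lt_of_le (sig_nonneg P b y') with h0 | h0
  · have e1 : t * P.sig b₁ y' = 0 := by linarith [hσ ▸ h0]
    have e2 : (1 - t) * P.sig b₂ y' = 0 := by linarith [hσ ▸ h0]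
    rw [e1, e2, ← h0]; ring_nf; rfl
  · set τ : ℝ := t * P.sig b₁ y' / P.sig b y' with hτ
    have hτ0 : 0 ≤ τ := div_nonneg h1 h0.le
    have hτ1 : τ ≤ 1 := by
      rw [div_le_one h0]; linarith
    have hne : P.sig b y' ≠ 0 := ne_of_gt h0
    have hlam : P.lam y' b = Belief.conv τ hτ0 hτ1 (P.lam y' b₁) (P.lam y' b₂) := by
      apply Subtype.ext
      funext μ'
      have hbval : (P.lam y' b).1 μ' = (∑ μ, b.1 μ * P.Q μ y' μ') / P.sig b y' := by
        rw [SEP.lam, dif_pos h0]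
      have hnum : ∑ μ, b.1 μ * P.Q μ y' μ'
          = t * ∑ μ, b₁.1 μ * P.Q μ y' μ' + (1 - t) * ∑ μ, b₂.1 μ * P.Q μ y' μ' := by
        simp only [hb, Belief.conv, add_mul, Finset.sum_add_distrib, Finset.mul_sum, mul_assoc]
      have t1 : τ * (P.lam y' b₁).1 μ' = t * (∑ μ, b₁.1 μ * P.Q μ y' μ') / P.sig b y' := by
        rcases eq_or_lt_of_le (sig_nonneg P b₁ y') with hs1 | hs1
        · rw [num_eq_zero P b₁ y' hs1.symm μ']
          simp [hτ, ← hs1]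
        · rw [SEP.lam, dif_pos hs1]
          field_simp [hτ]
          rw [hτ]
          field_simp
      have t2 : (1 - τ) * (P.lam y' b₂).1 μ' = (1 - t) * (∑ μ, b₂.1 μ * P.Q μ y' μ') / P.sig b y' := by
        have h1τ : 1 - τ = (1 - t) * P.sig b₂ y' / P.sig b y' := by
          rw [hτ, eq_div_iff hne]; field_simp; linarith
        rcases eq_or_lt_of_le (sig_nonneg P b₂ y') with hs2 | hs2
        · rw [num_eq_zero P b₂ y' hs2.symm μ', h1τ, ← hs2]
          simp
        · rw [SEP.lam, dif_pos hs2, h1τ]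
          field_simp
      show (P.lam y' b).1 μ' = τ * (P.lam y' b₁).1 μ' + (1 - τ) * (P.lam y' b₂).1 μ'
      rw [hbval, hnum, t1, t2]
      ring
    have hc := hconc s' (P.lam y' b₁) (P.lam y' b₂) τ hτ0 hτ1
    rw [← hlam] at hc
    have := mul_le_mul_of_nonneg_left hc h0.le
    calc t * P.sig b₁ y' * v s' (P.lam y' b₁) + (1 - t) * P.sig b₂ y' * v s' (P.lam y' b₂)
        = P.sig b y' * (τ * v s' (P.lam y' b₁) + (1 - τ) * v s' (P.lam y' b₂)) := by
          have e1 : P.sig b y' * τ = t * P.sig b₁ y' := by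
            rw [hτ]; field_simp
          have e2 : P.sig b y' * (1 - τ) = (1 - t) * P.sig b₂ y' := by
            rw [mul_sub, e1]; linarith
          rw [mul_add, ← mul_assoc, ← mul_assoc, e1, e2]
      _ ≤ P.sig b y' * v s' (P.lam y' b) := this

end Aux

/-- **One-step preservation of concavity by the Bellman operator.** If the
bounded function `v` is concave in the belief argument for every state, then
so is `H v`. -/
theorem bellman_preserves_concavity {S Y M A : Type} [Fintype S] [Fintype Y] [Fintype M] [Fintype A]
    [Nonempty S] [Nonempty Y] [Nonempty M] [Nonempty A]
    (P : SEP S Y M A)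
    (v : S → Belief M → ℝ) (hbdd : SEP.Bdd v)
    (hconc : ∀ (s : S) (b₁ b₂ : Belief M) (t : ℝ) (ht0 : 0 ≤ t) (ht1 : t ≤ 1),
      t * v s b₁ + (1 - t) * v s b₂ ≤ v s (Belief.conv t ht0 ht1 b₁ b₂)) :
    ∀ (s : S) (b₁ b₂ : Belief M) (t : ℝ) (ht0 : 0 ≤ t) (ht1 : t ≤ 1),
      t * P.H v s b₁ + (1 - t) * P.H v s b₂ ≤ P.H v s (Belief.conv t ht0 ht1 b₁ b₂) := by
  intro s b₁ b₂ t ht0 ht1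
  set b := Belief.conv t ht0 ht1 b₁ b₂ with hb
  have hσ : ∀ y', P.sig b y' = t * P.sig b₁ y' + (1 - t) * P.sig b₂ y' :=
    fun y' => sig_conv ..
  have hyineq : ∀ (a : A) (y' : Y),
      t * (P.sig b₁ y' * P.hy y' s a fun s' => v s' (P.lam y' b₁))
        + (1 - t) * (P.sig b₂ y' * P.hy y' s a fun s' => v s' (P.lam y' b₂))
      ≤ P.sig b y' * P.hy y' s a fun s' => v s' (P.lam y' b) := by
    intro a y'
    have A : ∑ s', P.p y' s a s' *
          (t * P.sig b₁ y' * v s' (P.lam y' b₁) + (1 - t) * P.sig b₂ y' * v s' (P.lam y' b₂))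
        ≤ ∑ s', P.p y' s a s' * (P.sig b y' * v s' (P.lam y' b)) :=
      Finset.sum_le_sum fun s' _ => mul_le_mul_of_nonneg_left
        (key P v hconc s' b₁ b₂ t ht0 ht1 y') (P.p_nonneg y' s a s')
    have hβA := mul_le_mul_of_nonneg_left A P.β_nonneg
    have eL : t * (P.sig b₁ y' * P.hy y' s a fun s' => v s' (P.lam y' b₁))
        + (1 - t) * (P.sig b₂ y' * P.hy y' s a fun s' => v s' (P.lam y' b₂))
        = (t * P.sig b₁ y' + (1 - t) * P.sig b₂ y') * P.c s y' a
          + P.β * ∑ s', P.p y' s a s' *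
            (t * P.sig b₁ y' * v s' (P.lam y' b₁) + (1 - t) * P.sig b₂ y' * v s' (P.lam y' b₂)) := by
      have e : ∑ s', P.p y' s a s' *
            (t * P.sig b₁ y' * v s' (P.lam y' b₁) + (1 - t) * P.sig b₂ y' * v s' (P.lam y' b₂))
          = t * P.sig b₁ y' * ∑ s', P.p y' s a s' * v s' (P.lam y' b₁)
            + (1 - t) * P.sig b₂ y' * ∑ s', P.p y' s a s' * v s' (P.lam y' b₂) := by
        rw [Finset.mul_sum, Finset.mul_sum, ← Finset.sum_add_distrib]
        exact Finset.sum_congr rfl fun s' _ => by ring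
      simp only [SEP.hy]
      rw [e]; ring
    have eR : P.sig b y' * P.hy y' s a (fun s' => v s' (P.lam y' b))
        = (t * P.sig b₁ y' + (1 - t) * P.sig b₂ y') * P.c s y' a
          + P.β * ∑ s', P.p y' s a s' * (P.sig b y' * v s' (P.lam y' b)) := by
      have e : ∑ s', P.p y' s a s' * (P.sig b y' * v s' (P.lam y' b))
          = P.sig b y' * ∑ s', P.p y' s a s' * v s' (P.lam y' b) := by
        rw [Finset.mul_sum]
        exact Finset.sum_congr rfl fun s' _ => by ring
      simp only [SEP.hy]
      rw [e, ← hσ y']; ring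
    rw [eL, eR]
    linarith
  have hF : ∀ a : A,
      t * (∑ y', P.sig b₁ y' * P.hy y' s a fun s' => v s' (P.lam y' b₁))
        + (1 - t) * (∑ y', P.sig b₂ y' * P.hy y' s a fun s' => v s' (P.lam y' b₂))
      ≤ ∑ y', P.sig b y' * P.hy y' s a fun s' => v s' (P.lam y' b) := by
    intro a
    rw [Finset.mul_sum, Finset.mul_sum, ← Finset.sum_add_distrib]
    exact Finset.sum_le_sum fun y' _ => hyineq a y'
  simp only [SEP.H]
  apply Finset.le_inf'
  intro a ha
  calc t * ((P.act s).inf' (P.act_ne s) fun a =>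
          ∑ y', P.sig b₁ y' * P.hy y' s a fun s' => v s' (P.lam y' b₁))
      + (1 - t) * ((P.act s).inf' (P.act_ne s) fun a =>
          ∑ y', P.sig b₂ y' * P.hy y' s a fun s' => v s' (P.lam y' b₂))
      ≤ t * (∑ y', P.sig b₁ y' * P.hy y' s a fun s' => v s' (P.lam y' b₁))
        + (1 - t) * (∑ y', P.sig b₂ y' * P.hy y' s a fun s' => v s' (P.lam y' b₂)) := by
        apply add_le_add
        · exact mul_le_mul_of_nonneg_left (Finset.inf'_le _ ha) ht0
        · exact mul_le_mul_of_nonneg_left (Finset.inf'_le _ ha) (by linarith)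
    _ ≤ _ := hF a
end

section
/- The SEP-POMDP Bellman operator is a β-contraction. For any bounded functions v, w : S × B → ℝ, sup_{(s, b) ∈ S × B} |(Hv)(s, b) − (Hw)(s, b)| ≤ β * sup_{(s, b) ∈ S × B} |v(s, b) − w(s, b)|. Consequently, since 0 ≤ β < 1, H has a unique bounded fixed point v* : S × B → ℝ with v* = Hv*. -/
open Finset

section Aux

variable {S Y M A : Type} [Fintype S] [Fintype Y] [Fintype M] [Fintype A]

noncomputable instance beliefNonempty [Nonempty M] : Nonempty (Belief M) :=
  ⟨⟨fun _ => (Fintype.card M : ℝ)⁻¹,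
    fun _ => by positivity,
    by
      rw [Finset.sum_const, Finset.card_univ, nsmul_eq_mul]
      exact mul_inv_cancel₀ (by exact_mod_cast Fintype.card_ne_zero)⟩⟩

namespace SEP

lemma sig_nonneg (P : SEP S Y M A) (b : Belief M) (y' : Y) : 0 ≤ P.sig b y' :=
  Finset.sum_nonneg fun μ _ => Finset.sum_nonneg fun μ' _ =>
    mul_nonneg (b.2.1 μ) (P.Q_nonneg μ y' μ')

lemma sig_sum (P : SEP S Y M A) (b : Belief M) : ∑ y', P.sig b y' = 1 := by
  unfold sig
  rw [Finset.sum_comm]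
  have h : ∀ μ : M, ∑ y', ∑ μ', b.1 μ * P.Q μ y' μ' = b.1 μ := by
    intro μ
    simp_rw [← Finset.mul_sum]
    rw [P.Q_sum μ, mul_one]
  simp_rw [h]
  exact b.2.2

end SEP

lemma abs_inf'_sub_inf'_le {α : Type*} (t : Finset α) (ht : t.Nonempty) (F G : α → ℝ) (δ : ℝ)
    (h : ∀ a ∈ t, |F a - G a| ≤ δ) : |t.inf' ht F - t.inf' ht G| ≤ δ := by
  rw [abs_sub_le_iff]
  constructor
  · obtain ⟨a, ha, hGa⟩ := t.exists_mem_eq_inf' ht G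
    have h1 : t.inf' ht F ≤ F a := t.inf'_le F ha
    have h2 : F a - G a ≤ δ := (abs_sub_le_iff.mp (h a ha)).1
    rw [hGa]; linarith
  · obtain ⟨a, ha, hFa⟩ := t.exists_mem_eq_inf' ht F
    have h1 : t.inf' ht G ≤ G a := t.inf'_le G ha
    have h2 : G a - F a ≤ δ := (abs_sub_le_iff.mp (h a ha)).2
    rw [hFa]; linarith

lemma abs_inf'_le {α : Type*} (t : Finset α) (ht : t.Nonempty) (F : α → ℝ) (δ : ℝ)
    (h : ∀ a ∈ t, |F a| ≤ δ) : |t.inf' ht F| ≤ δ := by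
  have := abs_inf'_sub_inf'_le t ht F (fun _ => 0) δ (by simpa using h)
  simpa using this

namespace SEP

/-- The key pointwise contraction estimate for `H`. -/
lemma H_dist_le (P : SEP S Y M A) (v w : S → Belief M → ℝ) (K : ℝ) (hK0 : 0 ≤ K)
    (hK : ∀ s b, |v s b - w s b| ≤ K) (s : S) (b : Belief M) :
    |P.H v s b - P.H w s b| ≤ P.β * K := by
  apply abs_inf'_sub_inf'_le
  intro a _
  rw [← Finset.sum_sub_distrib]
  calc |∑ y', (P.sig b y' * P.hy y' s a (fun s' => v s' (P.lam y' b)) -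
          P.sig b y' * P.hy y' s a (fun s' => w s' (P.lam y' b)))|
      ≤ ∑ y', |P.sig b y' * P.hy y' s a (fun s' => v s' (P.lam y' b)) -
          P.sig b y' * P.hy y' s a (fun s' => w s' (P.lam y' b))| :=
        Finset.abs_sum_le_sum_abs _ _
    _ ≤ ∑ y', P.sig b y' * (P.β * K) := by
        apply Finset.sum_le_sum
        intro y' _
        rw [← mul_sub, abs_mul, abs_of_nonneg (P.sig_nonneg b y')]
        apply mul_le_mul_of_nonneg_left _ (P.sig_nonneg b y')
        unfold hy
        rw [add_sub_add_left_eq_sub, ← mul_sub, abs_mul, abs_of_nonneg P.β_nonneg,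
          ← Finset.sum_sub_distrib]
        apply mul_le_mul_of_nonneg_left _ P.β_nonneg
        calc |∑ s', (P.p y' s a s' * v s' (P.lam y' b) - P.p y' s a s' * w s' (P.lam y' b))|
            ≤ ∑ s', |P.p y' s a s' * v s' (P.lam y' b) - P.p y' s a s' * w s' (P.lam y' b)| :=
              Finset.abs_sum_le_sum_abs _ _
          _ ≤ ∑ s', P.p y' s a s' * K := by
              apply Finset.sum_le_sum
              intro s' _
              rw [← mul_sub, abs_mul, abs_of_nonneg (P.p_nonneg y' s a s')]
              exact mul_le_mul_of_nonneg_left (hK s' (P.lam y' b)) (P.p_nonneg y' s a s')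
          _ = K := by rw [← Finset.sum_mul, P.p_sum, one_mul]
    _ = P.β * K := by rw [← Finset.sum_mul, P.sig_sum, one_mul]

variable [Nonempty S] [Nonempty Y] [Nonempty A]

/-- A uniform bound on the absolute value of the cost function. -/
noncomputable def Cc (P : SEP S Y M A) : ℝ :=
  (Finset.univ : Finset (S × Y × A)).sup' Finset.univ_nonempty fun t => |P.c t.1 t.2.1 t.2.2|

lemma abs_c_le (P : SEP S Y M A) (s : S) (y' : Y) (a : A) : |P.c s y' a| ≤ P.Cc :=
  Finset.le_sup' (fun t : S × Y × A => |P.c t.1 t.2.1 t.2.2|)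
    (Finset.mem_univ (s, y', a))

lemma H_abs_le (P : SEP S Y M A) (v : S → Belief M → ℝ) (C : ℝ)
    (hC : ∀ s b, |v s b| ≤ C) (s : S) (b : Belief M) :
    |P.H v s b| ≤ P.Cc + P.β * C := by
  apply abs_inf'_le
  intro a _
  calc |∑ y', P.sig b y' * P.hy y' s a (fun s' => v s' (P.lam y' b))|
      ≤ ∑ y', |P.sig b y' * P.hy y' s a (fun s' => v s' (P.lam y' b))| :=
        Finset.abs_sum_le_sum_abs _ _
    _ ≤ ∑ y', P.sig b y' * (P.Cc + P.β * C) := by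
        apply Finset.sum_le_sum
        intro y' _
        rw [abs_mul, abs_of_nonneg (P.sig_nonneg b y')]
        apply mul_le_mul_of_nonneg_left _ (P.sig_nonneg b y')
        unfold hy
        calc |P.c s y' a + P.β * ∑ s', P.p y' s a s' * v s' (P.lam y' b)|
            ≤ |P.c s y' a| + |P.β * ∑ s', P.p y' s a s' * v s' (P.lam y' b)| := abs_add_le _ _
          _ ≤ P.Cc + P.β * C := by
              apply add_le_add (P.abs_c_le s y' a)
              rw [abs_mul, abs_of_nonneg P.β_nonneg]
              apply mul_le_mul_of_nonneg_left _ P.β_nonneg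
              calc |∑ s', P.p y' s a s' * v s' (P.lam y' b)|
                  ≤ ∑ s', |P.p y' s a s' * v s' (P.lam y' b)| := Finset.abs_sum_le_sum_abs _ _
                _ ≤ ∑ s', P.p y' s a s' * C := by
                    apply Finset.sum_le_sum
                    intro s' _
                    rw [abs_mul, abs_of_nonneg (P.p_nonneg y' s a s')]
                    exact mul_le_mul_of_nonneg_left (hC s' _) (P.p_nonneg y' s a s')
                _ = C := by rw [← Finset.sum_mul, P.p_sum, one_mul]
    _ = P.Cc + P.β * C := by rw [← Finset.sum_mul, P.sig_sum, one_mul]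

end SEP

/-- `S × Belief M` equipped with the discrete topology, so that bounded
continuous functions on it are just bounded functions. -/
def DX (S M : Type) [Fintype M] : Type := S × Belief M

instance (S M : Type) [Fintype M] : TopologicalSpace (DX S M) := ⊥
instance (S M : Type) [Fintype M] : DiscreteTopology (DX S M) := ⟨rfl⟩
instance (S M : Type) [Fintype M] [Nonempty S] [Nonempty M] : Nonempty (DX S M) :=
  show Nonempty (S × Belief M) from inferInstance

end Aux

/-- **The SEP-POMDP Bellman operator is a β-contraction**, and consequently
has a unique bounded fixed point. -/
theorem bellman_contraction
    {S Y M A : Type} [Fintype S] [Fintype Y] [Fintype M] [Fintype A]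
    [Nonempty S] [Nonempty Y] [Nonempty M] [Nonempty A]
    (P : SEP S Y M A) :
    (∀ v w : S → Belief M → ℝ, SEP.Bdd v → SEP.Bdd w →
      (⨆ x : S × Belief M, |P.H v x.1 x.2 - P.H w x.1 x.2|) ≤
        P.β * ⨆ x : S × Belief M, |v x.1 x.2 - w x.1 x.2|) ∧
    ∃! vstar : S → Belief M → ℝ, SEP.Bdd vstar ∧ ∀ s b, vstar s b = P.H vstar s b := by
  classical
  constructor
  · -- contraction
    intro v w hv hw
    obtain ⟨Cv, hCv⟩ := hv
    obtain ⟨Cw, hCw⟩ := hw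
    set K : ℝ := ⨆ x : S × Belief M, |v x.1 x.2 - w x.1 x.2| with hKdef
    have hbdd : BddAbove (Set.range fun x : S × Belief M => |v x.1 x.2 - w x.1 x.2|) := by
      refine ⟨Cv + Cw, ?_⟩
      rintro r ⟨x, rfl⟩
      calc |v x.1 x.2 - w x.1 x.2| ≤ |v x.1 x.2| + |w x.1 x.2| := abs_sub _ _
        _ ≤ Cv + Cw := add_le_add (hCv _ _) (hCw _ _)
    have hK : ∀ s b, |v s b - w s b| ≤ K := fun s b => le_ciSup hbdd (⟨s, b⟩ : S × Belief M)
    have hK0 : 0 ≤ K := le_trans (abs_nonneg _) (hK (Classical.arbitrary S)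
      (Classical.arbitrary (Belief M)))
    exact ciSup_le fun x => P.H_dist_le v w K hK0 hK x.1 x.2
  · -- unique fixed point via Banach
    set T : (BoundedContinuousFunction (DX S M) ℝ) → (BoundedContinuousFunction (DX S M) ℝ) := fun f =>
      BoundedContinuousFunction.ofNormedAddCommGroup
        (fun x : DX S M => P.H (fun s b => f ((s, b) : S × Belief M)) x.1 x.2)
        continuous_of_discreteTopology (P.Cc + P.β * ‖f‖)
        (fun x => by
          rw [Real.norm_eq_abs]
          exact P.H_abs_le _ ‖f‖
            (fun s b => by
              rw [← Real.norm_eq_abs]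
              exact f.norm_coe_le_norm ((s, b) : S × Belief M)) x.1 x.2) with hT
    have hTapp : ∀ (f : BoundedContinuousFunction (DX S M) ℝ) (x : DX S M),
        T f x = P.H (fun s b => f ((s, b) : S × Belief M)) x.1 x.2 := fun f x => rfl
    have hLip : LipschitzWith ⟨P.β, P.β_nonneg⟩ T := by
      apply LipschitzWith.of_dist_le_mul
      intro f g
      show dist (T f) (T g) ≤ P.β * dist f g
      rw [BoundedContinuousFunction.dist_le
        (mul_nonneg P.β_nonneg dist_nonneg)]
      intro x
      rw [hTapp, hTapp, Real.dist_eq]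
      refine P.H_dist_le _ _ (dist f g) dist_nonneg (fun s b => ?_) x.1 x.2
      rw [← Real.dist_eq]
      exact f.dist_coe_le_dist ((s, b) : S × Belief M)
    have hc : ContractingWith ⟨P.β, P.β_nonneg⟩ T := ⟨by exact_mod_cast P.β_lt_one, hLip⟩
    set g : BoundedContinuousFunction (DX S M) ℝ := ContractingWith.fixedPoint T hc with hg
    have hgfix : T g = g := hc.fixedPoint_isFixedPt
    refine ⟨fun s b => g ((s, b) : DX S M), ⟨⟨‖g‖, fun s b => by
      rw [← Real.norm_eq_abs]; exact g.norm_coe_le_norm _⟩, fun s b => ?_⟩, ?_⟩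
    · have hx : (T g) ((s, b) : DX S M) = g ((s, b) : DX S M) := by rw [hgfix]
      show g ((s, b) : DX S M) = _
      rw [← hx]; exact hTapp g _
    · rintro w ⟨⟨Cw, hCw⟩, hwfix⟩
      set fw : BoundedContinuousFunction (DX S M) ℝ :=
        BoundedContinuousFunction.ofNormedAddCommGroup
          (fun x : DX S M => w x.1 x.2) continuous_of_discreteTopology Cw
          (fun x => by rw [Real.norm_eq_abs]; exact hCw x.1 x.2) with hfw
      have hfwfix : Function.IsFixedPt T fw := by
        ext x
        rw [hTapp]
        exact (hwfix x.1 x.2).symm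
      have : fw = g := hc.fixedPoint_unique hfwfix
      funext s b
      calc w s b = fw ((s, b) : DX S M) := rfl
        _ = g ((s, b) : DX S M) := by rw [this]
end
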